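/- Let ℓ > 0 and α > 0. The functions φ_n are eigenfunctions with eigenvalues λ_n of the Gaussian-kernel integral operator with respect to μ_α: for every integer n ≥ 0 and every real x, ∫_ℝ exp(−(x−y)²/(2ℓ²))·φ_n(y) dμ_α(y) = λ_n·φ_n(x). -/

import Mathlib

open Real MeasureTheory Filter Polynomial Set

/-- Probabilists' Hermite polynomial evaluated at a real number. -/
noncomputable def H (n : ℕ) (x : ℝ) : ℝ := Polynomial.aeval x (Polynomial.hermite n)

namespace GaussHermite

lemma hermite_deriv (n : ℕ) :
    derivative (hermite (n + 1)) = C ((n : ℤ) + 1) * hermite n := by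
  induction n with
  | zero => simp [hermite_one, hermite_zero]
  | succ n ih =>
    rw [hermite_succ (n + 1), derivative_sub, derivative_mul, derivative_X, one_mul, ih,
      derivative_mul, derivative_C, zero_mul, zero_add, hermite_succ n]
    push_cast
    simp only [C_add, C_1]
    ring

lemma H_zero (x : ℝ) : H 0 x = 1 := by simp [H, hermite_zero]

lemma H_one (x : ℝ) : H 1 x = x := by simp [H, hermite_one]

lemma H_rec (k : ℕ) (x : ℝ) :
    H (k + 2) x = x * H (k + 1) x - ((k : ℝ) + 1) * H k x := by
  unfold H
  rw [show k + 2 = (k + 1) + 1 from rfl, hermite_succ (k + 1), map_sub, map_mul, aeval_X,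
    hermite_deriv, map_mul, aeval_C]
  simp only [algebraMap_int_eq, eq_intCast]
  push_cast
  ring

noncomputable def HP (k : ℕ) (c : ℝ) : Polynomial ℝ :=
  ((hermite k).map (Int.castRingHom ℝ)).comp (C c * X)

lemma HP_eval (k : ℕ) (c y : ℝ) : (HP k c).eval y = H k (c * y) := by
  rw [HP, eval_comp, eval_mul, eval_C, eval_X, H, aeval_def, eval₂_eq_eval_map,
    algebraMap_int_eq]

lemma HP_zero (c : ℝ) : HP 0 c = 1 := by simp [HP, hermite_zero]

lemma HP_one (c : ℝ) : HP 1 c = C c * X := by simp [HP, hermite_one]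

lemma HP_rec (k : ℕ) (c : ℝ) :
    HP (k + 2) c = C c * (X * HP (k + 1) c) - C ((k : ℝ) + 1) * HP k c := by
  unfold HP
  rw [show k + 2 = (k + 1) + 1 from rfl, hermite_succ (k + 1), hermite_deriv]
  simp only [Polynomial.map_sub, Polynomial.map_mul, map_X, map_C, sub_comp, mul_comp, X_comp,
    C_comp, Int.coe_castRingHom]
  push_cast
  ring

lemma HP_deriv (k : ℕ) (c : ℝ) :
    derivative (HP (k + 1) c) = C (c * ((k : ℝ) + 1)) * HP k c := by
  unfold HP
  rw [derivative_comp, derivative_map, hermite_deriv]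
  simp only [Polynomial.map_mul, map_C, Int.coe_castRingHom, derivative_mul, derivative_C,
    derivative_X, zero_mul, mul_one, zero_add, mul_comp, C_comp]
  rw [← mul_assoc, ← C_mul]
  congr 2
  push_cast
  ring


lemma integral_gauss_lin {a : ℝ} (ha : 0 < a) (b : ℝ) :
    ∫ y : ℝ, Real.exp (-(a * y ^ 2) + b * y)
      = Real.sqrt (π / a) * Real.exp (b ^ 2 / (4 * a)) := by
  have ha' : a ≠ 0 := ne_of_gt ha
  have key : ∀ y : ℝ, -(a * y ^ 2) + b * y
      = -(a * (y - b / (2 * a)) ^ 2) + b ^ 2 / (4 * a) := by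
    intro y; field_simp; ring
  calc ∫ y : ℝ, Real.exp (-(a * y ^ 2) + b * y)
      = ∫ y : ℝ, Real.exp (-(a * (y - b / (2 * a)) ^ 2)) * Real.exp (b ^ 2 / (4 * a)) := by
        congr 1; funext y; rw [← Real.exp_add, key]
    _ = (∫ y : ℝ, Real.exp (-(a * (y - b / (2 * a)) ^ 2))) * Real.exp (b ^ 2 / (4 * a)) :=
        integral_mul_const _ _
    _ = (∫ y : ℝ, Real.exp (-(a * y ^ 2))) * Real.exp (b ^ 2 / (4 * a)) := by
        rw [integral_sub_right_eq_self (fun y : ℝ => Real.exp (-(a * y ^ 2))) (b / (2 * a))]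
    _ = Real.sqrt (π / a) * Real.exp (b ^ 2 / (4 * a)) := by
        simp_rw [← neg_mul]
        rw [integral_gaussian]

lemma integral_odd_gauss {a : ℝ} : ∫ t : ℝ, t * Real.exp (-(a * t ^ 2)) = 0 := by
  have h := integral_neg_eq_self (fun t : ℝ => t * Real.exp (-(a * t ^ 2))) volume
  simp only [neg_sq, neg_mul] at h
  have h2 : ∫ t : ℝ, -(t * Real.exp (-(a * t ^ 2)))
      = -∫ t : ℝ, t * Real.exp (-(a * t ^ 2)) := integral_neg _
  rw [h2] at h
  linarith

lemma integral_mul_gauss_lin {a : ℝ} (ha : 0 < a) (b : ℝ) :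
    ∫ y : ℝ, y * Real.exp (-(a * y ^ 2) + b * y)
      = b / (2 * a) * (Real.sqrt (π / a) * Real.exp (b ^ 2 / (4 * a))) := by
  have ha' : a ≠ 0 := ne_of_gt ha
  have key : ∀ y : ℝ, -(a * y ^ 2) + b * y
      = -(a * (y - b / (2 * a)) ^ 2) + b ^ 2 / (4 * a) := by
    intro y; field_simp; ring
  have hint : Integrable (fun y : ℝ => (y - b / (2 * a)) * Real.exp (-(a * (y - b / (2 * a)) ^ 2))) := by
    have : Integrable (fun y : ℝ => y * Real.exp (-(a * y ^ 2))) := by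
      simpa [neg_mul] using integrable_mul_exp_neg_mul_sq ha
    exact this.comp_sub_right (b / (2 * a))
  have hint2 : Integrable (fun y : ℝ => b / (2 * a) * Real.exp (-(a * (y - b / (2 * a)) ^ 2))) := by
    have : Integrable (fun y : ℝ => Real.exp (-(a * y ^ 2))) := by
      simpa [neg_mul] using integrable_exp_neg_mul_sq ha
    exact (this.comp_sub_right (b / (2 * a))).const_mul _
  calc ∫ y : ℝ, y * Real.exp (-(a * y ^ 2) + b * y)
      = ∫ y : ℝ, ((y - b / (2 * a)) * Real.exp (-(a * (y - b / (2 * a)) ^ 2))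
          + b / (2 * a) * Real.exp (-(a * (y - b / (2 * a)) ^ 2))) * Real.exp (b ^ 2 / (4 * a)) := by
        congr 1; funext y
        rw [key y, Real.exp_add]
        ring
    _ = ((∫ y : ℝ, (y - b / (2 * a)) * Real.exp (-(a * (y - b / (2 * a)) ^ 2)))
          + ∫ y : ℝ, b / (2 * a) * Real.exp (-(a * (y - b / (2 * a)) ^ 2)))
            * Real.exp (b ^ 2 / (4 * a)) := by
        rw [integral_mul_const, integral_add hint hint2]
    _ = (0 + b / (2 * a) * Real.sqrt (π / a)) * Real.exp (b ^ 2 / (4 * a)) := by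
        congr 2
        · rw [integral_sub_right_eq_self (fun t : ℝ => t * Real.exp (-(a * t ^ 2))) (b / (2 * a))]
          exact integral_odd_gauss
        · rw [integral_const_mul,
            integral_sub_right_eq_self (fun t : ℝ => Real.exp (-(a * t ^ 2))) (b / (2 * a))]
          simp_rw [← neg_mul]
          rw [integral_gaussian]
    _ = b / (2 * a) * (Real.sqrt (π / a) * Real.exp (b ^ 2 / (4 * a))) := by ring

lemma tendsto_poly_gauss_atTop {a : ℝ} (ha : 0 < a) (b : ℝ) (p : Polynomial ℝ) :
    Tendsto (fun y : ℝ => p.eval y * Real.exp (-(a * y ^ 2) + b * y)) atTop (nhds 0) := by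
  have h1 := p.tendsto_div_exp_atTop
  have h2 : Tendsto (fun y : ℝ => -(a * y ^ 2) + (b + 1) * y) atTop atBot := by
    apply tendsto_atBot_mono' atTop ?_ tendsto_neg_atTop_atBot
    filter_upwards [eventually_ge_atTop (max ((b + 2) / a) 0)] with y hy
    have hy0 : (0:ℝ) ≤ y := le_trans (le_max_right _ _) hy
    have hy1 : (b + 2) / a ≤ y := le_trans (le_max_left _ _) hy
    have : b + 2 ≤ a * y := by
      rw [div_le_iff₀ ha] at hy1; linarith [hy1]
    nlinarith
  have h3 : Tendsto (fun y : ℝ => Real.exp (-(a * y ^ 2) + (b + 1) * y)) atTop (nhds 0) :=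
    Real.tendsto_exp_atBot.comp h2
  have h4 := h1.mul h3
  rw [mul_zero] at h4
  refine h4.congr fun y => ?_
  rw [div_mul_eq_mul_div, mul_div_assoc, ← Real.exp_sub]
  congr 2
  ring

lemma tendsto_poly_gauss_atBot {a : ℝ} (ha : 0 < a) (b : ℝ) (p : Polynomial ℝ) :
    Tendsto (fun y : ℝ => p.eval y * Real.exp (-(a * y ^ 2) + b * y)) atBot (nhds 0) := by
  have h := (tendsto_poly_gauss_atTop ha (-b) (p.comp (-X))).comp tendsto_neg_atBot_atTop
  refine h.congr fun y => ?_
  simp only [Function.comp_apply, eval_comp, eval_neg, eval_X, neg_neg, neg_sq]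
  ring_nf

lemma continuous_poly_gauss (a b : ℝ) (p : Polynomial ℝ) :
    Continuous (fun y : ℝ => p.eval y * Real.exp (-(a * y ^ 2) + b * y)) := by
  apply (p.continuous).mul
  exact Real.continuous_exp.comp
    (((continuous_const.mul (continuous_pow 2)).neg).add (continuous_const.mul continuous_id))

lemma exists_abs_bound {f : ℝ → ℝ} (hf : Continuous f)
    (ht : Tendsto f atTop (nhds 0)) (hb : Tendsto f atBot (nhds 0)) :
    ∃ C : ℝ, ∀ y, |f y| ≤ C := by
  obtain ⟨A, hA⟩ := eventually_atTop.1 (Metric.tendsto_nhds.mp ht 1 one_pos)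
  obtain ⟨B, hB⟩ := eventually_atBot.1 (Metric.tendsto_nhds.mp hb 1 one_pos)
  obtain ⟨C, hC⟩ := (isCompact_Icc (a := B) (b := A)).exists_bound_of_continuousOn
    hf.continuousOn
  refine ⟨max C 1, fun y => ?_⟩
  by_cases h1 : A ≤ y
  · have := hA y h1
    rw [Real.dist_0_eq_abs] at this
    exact le_trans this.le (le_max_right _ _)
  · by_cases h2 : y ≤ B
    · have := hB y h2
      rw [Real.dist_0_eq_abs] at this
      exact le_trans this.le (le_max_right _ _)
    · have hy : y ∈ Icc B A := ⟨le_of_not_ge h2, le_of_not_ge h1⟩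
      have := hC y hy
      rw [Real.norm_eq_abs] at this
      exact le_trans this (le_max_left _ _)

lemma integrable_poly_gauss {a : ℝ} (ha : 0 < a) (b : ℝ) (p : Polynomial ℝ) :
    Integrable (fun y : ℝ => p.eval y * Real.exp (-(a * y ^ 2) + b * y)) := by
  have ha2 : 0 < a / 2 := by linarith
  obtain ⟨C, hC⟩ := exists_abs_bound (continuous_poly_gauss (a / 2) b p)
    (tendsto_poly_gauss_atTop ha2 b p) (tendsto_poly_gauss_atBot ha2 b p)
  refine Integrable.mono' ((integrable_exp_neg_mul_sq ha2).const_mul C)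
    (continuous_poly_gauss a b p).aestronglyMeasurable ?_
  filter_upwards with y
  have hsplit : Real.exp (-(a * y ^ 2) + b * y)
      = Real.exp (-(a / 2 * y ^ 2) + b * y) * Real.exp (-(a / 2) * y ^ 2) := by
    rw [← Real.exp_add]; congr 1; ring
  rw [Real.norm_eq_abs, hsplit, ← mul_assoc, abs_mul, abs_of_nonneg (Real.exp_pos _).le]
  exact mul_le_mul_of_nonneg_right (hC y) (Real.exp_pos _).le

lemma integral_hasDerivAt_eq_zero {F F' : ℝ → ℝ} (hd : ∀ y, HasDerivAt F (F' y) y)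
    (hi : Integrable F') (htop : Tendsto F atTop (nhds 0)) (hbot : Tendsto F atBot (nhds 0)) :
    ∫ y : ℝ, F' y = 0 := by
  have h1 := integral_Iic_of_hasDerivAt_of_tendsto' (a := 0) (fun x _ => hd x)
    hi.integrableOn hbot
  have h2 := integral_Ioi_of_hasDerivAt_of_tendsto' (a := 0) (fun x _ => hd x)
    hi.integrableOn htop
  rw [← intervalIntegral.integral_Iic_add_Ioi (b := (0:ℝ)) hi.integrableOn hi.integrableOn, h1, h2]
  ring


noncomputable def J (a b : ℝ) (p : Polynomial ℝ) : ℝ :=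
  ∫ y : ℝ, p.eval y * Real.exp (-(a * y ^ 2) + b * y)

lemma J_add {a : ℝ} (ha : 0 < a) (b : ℝ) (p q : Polynomial ℝ) :
    J a b (p + q) = J a b p + J a b q := by
  unfold J
  simp only [eval_add, add_mul]
  exact integral_add (integrable_poly_gauss ha b p) (integrable_poly_gauss ha b q)

lemma J_sub {a : ℝ} (ha : 0 < a) (b : ℝ) (p q : Polynomial ℝ) :
    J a b (p - q) = J a b p - J a b q := by
  unfold J
  simp only [eval_sub, sub_mul]
  exact integral_sub (integrable_poly_gauss ha b p) (integrable_poly_gauss ha b q)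

lemma J_C_mul (a b s : ℝ) (p : Polynomial ℝ) : J a b (C s * p) = s * J a b p := by
  unfold J
  simp only [eval_mul, eval_C, mul_assoc]
  exact integral_const_mul s _

lemma J_one {a : ℝ} (ha : 0 < a) (b : ℝ) :
    J a b 1 = Real.sqrt (π / a) * Real.exp (b ^ 2 / (4 * a)) := by
  unfold J
  simpa using integral_gauss_lin ha b

lemma J_X {a : ℝ} (ha : 0 < a) (b : ℝ) :
    J a b X = b / (2 * a) * (Real.sqrt (π / a) * Real.exp (b ^ 2 / (4 * a))) := by
  unfold J
  simpa using integral_mul_gauss_lin ha b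

lemma J_ibp {a : ℝ} (ha : 0 < a) (b : ℝ) (p : Polynomial ℝ) :
    2 * a * J a b (X * p) = J a b (derivative p) + b * J a b p := by
  have ha' : a ≠ 0 := ne_of_gt ha
  have key : J a b (derivative p + C b * p - C (2 * a) * (X * p)) = 0 := by
    unfold J
    apply integral_hasDerivAt_eq_zero
      (F := fun y => p.eval y * Real.exp (-(a * y ^ 2) + b * y))
    · intro y
      have h1 : HasDerivAt (fun y : ℝ => p.eval y) (p.derivative.eval y) y := p.hasDerivAt y
      have hinner : HasDerivAt (fun y : ℝ => -(a * y ^ 2) + b * y) (-(a * (2 * y)) + b) y := by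
        have := ((hasDerivAt_pow 2 y).const_mul a).neg.add ((hasDerivAt_id y).const_mul b)
        exact this.congr_deriv (by norm_num)
      have h2 := hinner.exp
      have h3 : HasDerivAt (fun y => p.eval y * Real.exp (-(a * y ^ 2) + b * y)) _ y := h1.mul h2
      convert h3 using 1
      simp only [eval_add, eval_sub, eval_mul, eval_C, eval_X]
      ring
    · exact integrable_poly_gauss ha b _
    · exact tendsto_poly_gauss_atTop ha b p
    · exact tendsto_poly_gauss_atBot ha b p
  rw [J_sub ha, J_add ha, J_C_mul, J_C_mul] at key
  linarith

lemma core {a : ℝ} (ha : 0 < a) (b c r w : ℝ)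
    (hc : c ^ 2 = 2 * a * (1 - r ^ 2)) (hw : c * b = 2 * a * (r * w)) (n : ℕ) :
    ∫ y : ℝ, (HP n c).eval y * Real.exp (-(a * y ^ 2) + b * y)
      = Real.sqrt (π / a) * Real.exp (b ^ 2 / (4 * a)) * (r ^ n * H n w) := by
  have ha' : a ≠ 0 := ne_of_gt ha
  show J a b (HP n c) = _
  set G := Real.sqrt (π / a) * Real.exp (b ^ 2 / (4 * a)) with hG
  have key : ∀ k, (J a b (HP k c) = G * (r ^ k * H k w))
      ∧ (J a b (HP (k + 1) c) = G * (r ^ (k + 1) * H (k + 1) w)) := by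
    intro k
    induction k with
    | zero =>
      constructor
      · rw [HP_zero, J_one ha b, H_zero]; ring
      · rw [HP_one, J_C_mul, J_X ha b, H_one]
        have hrw : c * (b / (2 * a)) = r * w := by
          field_simp
          linarith [hw]
        calc c * (b / (2 * a) * (Real.sqrt (π / a) * Real.exp (b ^ 2 / (4 * a))))
            = (c * (b / (2 * a))) * G := by rw [hG]; ring
          _ = G * (r ^ (0 + 1) * w) := by rw [hrw]; ring
    | succ k ih =>
      refine ⟨ih.2, ?_⟩
      have h2a : (2:ℝ) * a ≠ 0 := mul_ne_zero two_ne_zero ha'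
      have hXP : 2 * a * J a b (X * HP (k + 1) c)
          = c * ((k:ℝ) + 1) * (G * (r ^ k * H k w))
            + b * (G * (r ^ (k + 1) * H (k + 1) w)) := by
        rw [J_ibp ha, HP_deriv, J_C_mul, ih.1, ih.2]
      rw [show k + 1 + 1 = k + 2 from rfl, HP_rec, J_sub ha, J_C_mul, J_C_mul, ih.1, H_rec]
      apply mul_left_cancel₀ h2a
      linear_combination c * hXP + (((k:ℝ) + 1) * G * r ^ k * H k w) * hc
        + (G * r ^ (k + 1) * H (k + 1) w) * hw
  exact (key n).1


end GaussHermite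

open GaussHermite

theorem stmt_10 (ℓ α : ℝ) (hℓ : 0 < ℓ) (hα : 0 < α)
    (ε β δ2 : ℝ)
    (hε : ε = 1 / (Real.sqrt 2 * ℓ))
    (hβ : β = (1 + (2 * ε / α) ^ 2) ^ ((1 : ℝ) / 4))
    (hδ2 : δ2 = α ^ 2 * (β ^ 2 - 1) / 2)
    (φ : ℕ → ℝ → ℝ)
    (hφ : ∀ n x, φ n x = Real.sqrt (β / (n.factorial : ℝ)) * Real.exp (-δ2 * x ^ 2) *
      H n (Real.sqrt 2 * α * β * x))
    (lam : ℕ → ℝ)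
    (hlam : ∀ n, lam n = Real.sqrt (α ^ 2 / (α ^ 2 + δ2 + ε ^ 2)) *
      (ε ^ 2 / (α ^ 2 + δ2 + ε ^ 2)) ^ n)
    (n : ℕ) (x : ℝ) :
    ∫ y : ℝ, Real.exp (-(x - y) ^ 2 / (2 * ℓ ^ 2)) * φ n y *
        (α / Real.sqrt Real.pi * Real.exp (-(α ^ 2 * y ^ 2))) =
      lam n * φ n x := by
  have hα' : α ≠ 0 := ne_of_gt hα
  have hℓ' : ℓ ≠ 0 := ne_of_gt hℓ
  have hεpos : 0 < ε := by
    rw [hε]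
    positivity
  have hε2 : ε ^ 2 = 1 / (2 * ℓ ^ 2) := by
    rw [hε, div_pow, mul_pow, Real.sq_sqrt (by norm_num : (0:ℝ) ≤ 2)]
    norm_num
  have hq : (0:ℝ) < 1 + (2 * ε / α) ^ 2 := by positivity
  have hβpos : 0 < β := by rw [hβ]; positivity
  have hβ4 : β ^ 4 = 1 + (2 * ε / α) ^ 2 := by
    rw [hβ, ← Real.rpow_natCast _ 4, ← Real.rpow_mul hq.le]
    norm_num
  have hε2' : ε ^ 2 = α ^ 2 * (β ^ 4 - 1) / 4 := by
    rw [hβ4]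
    field_simp
    ring
  have hβ2 : 1 ≤ β ^ 2 := by nlinarith [sq_nonneg (2 * ε / α), sq_nonneg β, sq_nonneg (β ^ 2 - 1), sq_nonneg (β ^ 2 + 1)]
  have hδ2nn : 0 ≤ δ2 := by
    rw [hδ2]
    nlinarith [sq_nonneg α]
  set A := α ^ 2 + δ2 + ε ^ 2 with hA
  have hApos : 0 < A := by
    rw [hA]
    nlinarith [pow_pos hα 2, pow_pos hεpos 2]
  have hA' : A ≠ 0 := ne_of_gt hApos
  set c := Real.sqrt 2 * α * β with hcdef
  have hc2 : c ^ 2 = 2 * (α ^ 2 * β ^ 2) := by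
    rw [hcdef, mul_pow, mul_pow, Real.sq_sqrt (by norm_num : (0:ℝ) ≤ 2)]
    ring
  have hAval : A = α ^ 2 * (β ^ 2 + 1) ^ 2 / 4 := by
    rw [hA, hδ2]
    linear_combination hε2'
  set r := ε ^ 2 / A with hrdef
  set B := 2 * ε ^ 2 * x with hBdef
  set w := c * x with hwdef
  have hcc : c ^ 2 = 2 * A * (1 - r ^ 2) := by
    rw [hc2, hrdef, hAval, hε2']
    have hb1 : (β ^ 2 + 1) ≠ 0 := by positivity
    field_simp
    ring
  have hww : c * B = 2 * A * (r * w) := by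
    rw [hBdef, hrdef, hwdef]
    field_simp
  have hkey : ε ^ 2 * α ^ 2 = δ2 * α ^ 2 + δ2 ^ 2 := by
    rw [hδ2]
    linear_combination α ^ 2 * hε2'
  -- rewrite the integrand
  have hrw : ∀ y : ℝ, Real.exp (-(x - y) ^ 2 / (2 * ℓ ^ 2)) * φ n y *
        (α / Real.sqrt Real.pi * Real.exp (-(α ^ 2 * y ^ 2)))
      = (Real.sqrt (β / (n.factorial : ℝ)) * (α / Real.sqrt Real.pi)
          * Real.exp (-(ε ^ 2 * x ^ 2)))
        * ((HP n c).eval y * Real.exp (-(A * y ^ 2) + B * y)) := by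
    intro y
    rw [hφ, HP_eval]
    have e1 : -(x - y) ^ 2 / (2 * ℓ ^ 2) = -(ε ^ 2 * (x - y) ^ 2) := by
      rw [hε2]
      ring
    have e2 : Real.exp (-(ε ^ 2 * (x - y) ^ 2)) * Real.exp (-δ2 * y ^ 2)
          * Real.exp (-(α ^ 2 * y ^ 2))
        = Real.exp (-(ε ^ 2 * x ^ 2)) * Real.exp (-(A * y ^ 2) + B * y) := by
      rw [← Real.exp_add, ← Real.exp_add, ← Real.exp_add, hA, hBdef]
      congr 1
      ring
    rw [e1]
    linear_combination (Real.sqrt (β / (n.factorial : ℝ)) * H n (c * y)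
      * (α / Real.sqrt Real.pi)) * e2
  calc ∫ y : ℝ, Real.exp (-(x - y) ^ 2 / (2 * ℓ ^ 2)) * φ n y *
        (α / Real.sqrt Real.pi * Real.exp (-(α ^ 2 * y ^ 2)))
      = ∫ y : ℝ, (Real.sqrt (β / (n.factorial : ℝ)) * (α / Real.sqrt Real.pi)
          * Real.exp (-(ε ^ 2 * x ^ 2)))
        * ((HP n c).eval y * Real.exp (-(A * y ^ 2) + B * y)) := by
        congr 1; funext y; exact hrw y
    _ = (Real.sqrt (β / (n.factorial : ℝ)) * (α / Real.sqrt Real.pi)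
          * Real.exp (-(ε ^ 2 * x ^ 2)))
        * ∫ y : ℝ, (HP n c).eval y * Real.exp (-(A * y ^ 2) + B * y) :=
        integral_const_mul _ _
    _ = (Real.sqrt (β / (n.factorial : ℝ)) * (α / Real.sqrt Real.pi)
          * Real.exp (-(ε ^ 2 * x ^ 2)))
        * (Real.sqrt (π / A) * Real.exp (B ^ 2 / (4 * A)) * (r ^ n * H n w)) := by
        rw [core hApos B c r w hcc hww n]
    _ = lam n * φ n x := by
        rw [hlam, hφ, hwdef]
        have c1 : α / Real.sqrt π * Real.sqrt (π / A) = Real.sqrt (α ^ 2 / A) := by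
          rw [Real.sqrt_div (sq_nonneg α), Real.sqrt_div Real.pi_pos.le,
            Real.sqrt_sq hα.le]
          have hπ : Real.sqrt π ≠ 0 := ne_of_gt (Real.sqrt_pos.mpr Real.pi_pos)
          field_simp
        have c2 : Real.exp (-(ε ^ 2 * x ^ 2)) * Real.exp (B ^ 2 / (4 * A))
            = Real.exp (-δ2 * x ^ 2) := by
          rw [← Real.exp_add]
          congr 1
          rw [hBdef]
          field_simp
          linear_combination (-4 * x ^ 2) * hkey
        rw [← c1, ← c2]
        ring
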